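/- Let κ be a cardinal and X a topological space with χ(p, X) < κ for each p ∈ X, where κ is regular. If w(X) ≥ κ, then there is a subspace Y ⊆ X of size κ and a neighbourhood assignment f on Y such that for every open G ⊆ X, the set D_G^f is right-separated (in a well-order of type ≤ κ, each point has a neighbourhood missing all later points of D_G^f). -/

import Mathlib

open TopologicalSpace Cardinal Set

universe u

section Defs

variable {X : Type u} [TopologicalSpace X]

/-- `B` is a neighbourhood base of `x`: members are open sets containing `x`,
and every open set containing `x` contains a member of `B`. -/
def NbhdBasisAt (B : Set (Set X)) (x : X) : Prop :=
  (∀ U ∈ B, IsOpen U ∧ x ∈ U) ∧ ∀ V : Set X, IsOpen V → x ∈ V → ∃ U ∈ B, U ⊆ V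

/-- The family `F` contains a neighbourhood base of `x`. -/
def ContainsNbhdBasisAt (F : Set (Set X)) (x : X) : Prop :=
  ∀ V : Set X, IsOpen V → x ∈ V → ∃ U ∈ F, x ∈ U ∧ U ⊆ V

/-- Property (*) of a decomposition. -/
def StarProperty (𝒲 : X → Set (Set X)) : Prop :=
  ∀ x y : X, x ≠ y → ∀ U ∈ 𝒲 x, ∀ V ∈ 𝒲 y, x ∈ V → y ∈ U → (V \ U).Nonempty

/-- `𝒰` is an irreducible decomposition of a base of `X`. -/
def IsIrreducibleDecomp (𝒰 : X → Set (Set X)) : Prop :=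
  IsTopologicalBasis (⋃ x, 𝒰 x) ∧ (∀ x, NbhdBasisAt (𝒰 x) x) ∧
    ∀ x : X, ¬ ContainsNbhdBasisAt (⋃ y ∈ {y : X | y ≠ x}, 𝒰 y) x

def HasIrreducibleBase (X : Type u) [TopologicalSpace X] : Prop :=
  ∃ 𝒰 : X → Set (Set X), IsIrreducibleDecomp 𝒰

/-- `f` is a neighbourhood assignment on `Y`. -/
def IsNbhdAssignment (Y : Set X) (f : X → Set X) : Prop :=
  ∀ y ∈ Y, IsOpen (f y) ∧ y ∈ f y

/-- `D_N^f = { y ∈ Y : y ∈ N ⊆ f y }`. -/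
def Dset (Y : Set X) (f : X → Set X) (N : Set X) : Set X :=
  {y | y ∈ Y ∧ y ∈ N ∧ N ⊆ f y}

/-- `Y` is weakly separated (as a subspace of `X`). -/
def WeaklySeparatedSub (Y : Set X) : Prop :=
  ∃ f : X → Set X, IsNbhdAssignment Y f ∧
    ∀ y ∈ Y, ∀ z ∈ Y, y ≠ z → y ∉ f z ∨ z ∉ f y

/-- `Z` is pseudo weakly separated: it contains a weakly separated subspace of the
same cardinality. -/
def PseudoWeaklySeparated (Z : Set X) : Prop :=
  ∃ W ⊆ Z, #W = #Z ∧ WeaklySeparatedSub W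

/-- The weight of a space: least cardinality of a base. -/
noncomputable def weight (X : Type u) [TopologicalSpace X] : Cardinal.{u} :=
  sInf {c | ∃ B : Set (Set X), IsTopologicalBasis B ∧ c = #B}

/-- The character of `X` at `x`: least cardinality of a neighbourhood base at `x`. -/
noncomputable def charAt (x : X) : Cardinal.{u} :=
  sInf {c | ∃ B : Set (Set X), NbhdBasisAt B x ∧ c = #B}

/-- The character of `X`. -/
noncomputable def character (X : Type u) [TopologicalSpace X] : Cardinal.{u} :=
  ⨆ x : X, charAt x

/-- `N` is a network of `X`. -/
def IsNetwork (N : Set (Set X)) : Prop :=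
  ∀ x : X, ∀ U : Set X, IsOpen U → x ∈ U → ∃ M ∈ N, x ∈ M ∧ M ⊆ U

/-- The net weight of `X`: least cardinality of a network. -/
noncomputable def netWeight (X : Type u) [TopologicalSpace X] : Cardinal.{u} :=
  sInf {c | ∃ N : Set (Set X), IsNetwork N ∧ c = #N}

/-- Tkačenko's cardinal function `R`. -/
noncomputable def Rinv (X : Type u) [TopologicalSpace X] : Cardinal.{u} :=
  sSup {c | ∃ Y : Set X, WeaklySeparatedSub Y ∧ c = #Y}

/-- `S` is right-separated: it carries a well-ordering in which every point has an
open neighbourhood avoiding all later points of `S`. -/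
def RightSeparated (S : Set X) : Prop :=
  ∃ r : S → S → Prop, IsWellOrder S r ∧
    ∀ x : S, ∃ U : Set X, IsOpen U ∧ (x : X) ∈ U ∧ ∀ y : S, r x y → (y : X) ∉ U

end Defs

section Aux

variable {X : Type u} [TopologicalSpace X]

lemma exists_base_charAt (x : X) :
    ∃ B : Set (Set X), NbhdBasisAt B x ∧ #B = charAt x := by
  have hne : {c | ∃ B : Set (Set X), NbhdBasisAt B x ∧ c = #B}.Nonempty :=
    ⟨#{U : Set X | IsOpen U ∧ x ∈ U}, {U | IsOpen U ∧ x ∈ U},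
      ⟨fun U hU => hU, fun V hV hxV => ⟨V, ⟨hV, hxV⟩, subset_rfl⟩⟩, rfl⟩
  obtain ⟨B, hB, h⟩ := csInf_mem hne
  exact ⟨B, hB, h.symm⟩

lemma key_step (κ : Cardinal.{u}) (hw : κ ≤ weight X) (F : Set (Set X))
    (hopen : ∀ B ∈ F, IsOpen B) (hcard : #F < κ) :
    ∃ q : X, ∃ V : Set X, IsOpen V ∧ q ∈ V ∧ ∀ B ∈ F, ¬(q ∈ B ∧ B ⊆ V) := by
  by_contra h
  push_neg at h
  have hbasis : IsTopologicalBasis F :=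
    isTopologicalBasis_of_isOpen_of_nhds hopen (fun a u hau hu => by
      obtain ⟨B, hB, h1, h2⟩ := h a u hu hau
      exact ⟨B, hB, h1, h2⟩)
  have : weight X ≤ #F := csInf_le' ⟨F, hbasis, rfl⟩
  exact absurd (hw.trans this) (not_le.2 hcard)

end Aux

/-- if `χ(p,X) < κ` for all `p` (`κ` regular) and `w(X) ≥ κ`, then there
is a subspace `Y` of size `κ` and a neighbourhood assignment `f` on `Y` such that
`D_G^f` is right-separated for every open `G`. -/
theorem statement10 {X : Type u} [TopologicalSpace X] (κ : Cardinal.{u})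
    (hreg : κ.IsRegular) (hχ : ∀ p : X, charAt p < κ) (hw : κ ≤ weight X) :
    ∃ Y : Set X, #Y = κ ∧ ∃ f : X → Set X, IsNbhdAssignment Y f ∧
      ∀ G : Set X, IsOpen G → RightSeparated (Dset Y f G) := by
  classical
  -- choose neighbourhood bases of minimal size
  choose 𝓑 h𝓑 hcard𝓑 using fun p : X => exists_base_charAt p
  set T := κ.ord.ToType with hT
  haveI : IsWellOrder T (· < ·) := isWellOrder_lt
  -- initial segments of T are small
  have hIio : ∀ α : T, #{β : T // β < α} < κ := by
    intro α
    have h2 := Ordinal.typein_lt_self α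
    have h1 := Ordinal.card_typein (r := ((· < ·) : T → T → Prop)) α
    rw [← h1, ← Cardinal.lt_ord]
    exact h2
  -- unions of fewer than κ bases are small
  have hUcard : ∀ (ι : Type u) (z : ι → X), #ι < κ → #(⋃ i, 𝓑 (z i)) < κ := by
    intro ι z hι
    refine (Cardinal.mk_iUnion_le_sum_mk).trans_lt
      (Cardinal.sum_lt_of_isRegular hreg hι fun i => ?_)
    rw [hcard𝓑 (z i)]
    exact hχ (z i)
  -- the crucial existence statement at each stage
  have main : ∀ (α : T) (prior : ∀ β : T, β < α → X × Set X),
      ∃ q : X, ∃ V : Set X, IsOpen V ∧ q ∈ V ∧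
        ∀ B ∈ ⋃ β : {β : T // β < α}, 𝓑 ((prior β.1 β.2).1), ¬(q ∈ B ∧ B ⊆ V) := by
    intro α prior
    refine key_step κ hw _ (fun B hB => ?_) (hUcard _ _ (hIio α))
    obtain ⟨β, hβB⟩ := Set.mem_iUnion.1 hB
    exact ((h𝓑 _).1 B hβB).1
  choose qf Vf hVopen hqV hsep using main
  -- transfinite recursion
  let g : T → X × Set X := IsWellFounded.fix (· < ·)
    (fun α prior => (qf α prior, Vf α prior))
  have hg : ∀ α, g α = (qf α (fun β _ => g β), Vf α (fun β _ => g β)) :=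
    fun α => IsWellFounded.fix_eq _ _ α
  set yy : T → X := fun α => (g α).1 with hyy
  set UU : T → Set X := fun α => (g α).2 with hUU
  have hP : ∀ α : T, IsOpen (UU α) ∧ yy α ∈ UU α ∧
      ∀ B ∈ ⋃ β : {β : T // β < α}, 𝓑 (yy β.1), ¬(yy α ∈ B ∧ B ⊆ UU α) := by
    intro α
    have h := hg α
    have h1 : yy α = qf α (fun β _ => g β) := by show (g α).1 = _; rw [h]
    have h2 : UU α = Vf α (fun β _ => g β) := by show (g α).2 = _; rw [h]
    rw [h1, h2]
    exact ⟨hVopen α _, hqV α _, hsep α (fun β _ => g β)⟩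
  -- injectivity
  have hne : ∀ {β α : T}, β < α → yy α ≠ yy β := by
    intro β α hβα heq
    obtain ⟨B, hB, hBsub⟩ := (h𝓑 (yy β)).2 (UU α) (hP α).1 (heq ▸ (hP α).2.1)
    refine (hP α).2.2 B (Set.mem_iUnion.2 ⟨⟨β, hβα⟩, hB⟩) ⟨?_, hBsub⟩
    rw [heq]
    exact ((h𝓑 (yy β)).1 B hB).2
  have hinj : Function.Injective yy := by
    intro a b hab
    rcases lt_trichotomy a b with h | h | h
    · exact absurd hab.symm (hne h)
    · exact h
    · exact absurd hab (hne h)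
  refine ⟨Set.range yy, ?_, ?_⟩
  · rw [Cardinal.mk_range_eq yy hinj, hT, Cardinal.mk_toType, Cardinal.card_ord]
  set f : X → Set X := fun x =>
    if h : x ∈ Set.range yy then UU h.choose else Set.univ with hf
  have hfy : ∀ α, f (yy α) = UU α := by
    intro α
    have hmem : yy α ∈ Set.range yy := ⟨α, rfl⟩
    have h1 : f (yy α) = UU hmem.choose := dif_pos hmem
    rw [h1, hinj hmem.choose_spec]
  refine ⟨f, ?_, ?_⟩
  · rintro z ⟨α, rfl⟩
    rw [hfy]
    exact ⟨(hP α).1, (hP α).2.1⟩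
  intro G hG
  have hDmem : ∀ z : X, z ∈ Dset (Set.range yy) f G →
      ∃ α : T, yy α = z ∧ z ∈ G ∧ G ⊆ UU α := by
    rintro z ⟨⟨α, rfl⟩, hzG, hGf⟩
    exact ⟨α, rfl, hzG, by rwa [hfy] at hGf⟩
  choose idx hidx hidxG hidxU using
    fun z : Dset (Set.range yy) f G => hDmem z z.2
  have hidxinj : Function.Injective idx := by
    intro a b hab
    apply Subtype.ext
    rw [← hidx a, ← hidx b, hab]
  refine ⟨fun a b => idx a < idx b, ?_, ?_⟩
  · exact RelEmbedding.isWellOrder ⟨⟨idx, hidxinj⟩, Iff.rfl⟩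
  · intro x
    obtain ⟨B, hB, hBsub⟩ := (h𝓑 (yy (idx x))).2 G hG (by rw [hidx x]; exact hidxG x)
    refine ⟨B, ((h𝓑 (yy (idx x))).1 B hB).1, ?_, ?_⟩
    · have := ((h𝓑 (yy (idx x))).1 B hB).2
      rwa [hidx x] at this
    · intro z hlt hzB
      refine (hP (idx z)).2.2 B (Set.mem_iUnion.2 ⟨⟨idx x, hlt⟩, hB⟩) ⟨?_, hBsub.trans (hidxU z)⟩
      rw [hidx z]
      exact hzB
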